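/- The matrices J_r(x) = Id − ((1−cos‖x‖)/‖x‖²) x_∧ + ((‖x‖−sin‖x‖)/‖x‖³) x_∧² and K(x) = Id + (1/2) x_∧ + (1/‖x‖² − (1+cos‖x‖)/(2‖x‖ sin‖x‖)) x_∧² are mutually inverse for x ∈ ℝ³ with 0 < ‖x‖ < π, i.e., J_r(x) K(x) = Id. -/

import Mathlib

open Matrix

/-- The hat map `ℝ³ → so(3)`. -/
def hat (v : Fin 3 → ℝ) : Matrix (Fin 3) (Fin 3) ℝ :=
  !![0, -v 2, v 1; v 2, 0, -v 0; -v 1, v 0, 0]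

/-- Euclidean norm on `ℝ³`. -/
noncomputable def nrm (x : Fin 3 → ℝ) : ℝ := Real.sqrt (x 0 ^ 2 + x 1 ^ 2 + x 2 ^ 2)

/-- The right Jacobian of SO(3) in closed form. -/
noncomputable def Jr (x : Fin 3 → ℝ) : Matrix (Fin 3) (Fin 3) ℝ :=
  1 - ((1 - Real.cos (nrm x)) / nrm x ^ 2) • hat x
    + ((nrm x - Real.sin (nrm x)) / nrm x ^ 3) • (hat x * hat x)

/-- The claimed inverse of the right Jacobian. -/
noncomputable def JrInv (x : Fin 3 → ℝ) : Matrix (Fin 3) (Fin 3) ℝ :=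
  1 + (1 / 2 : ℝ) • hat x
    + (1 / nrm x ^ 2 - (1 + Real.cos (nrm x)) / (2 * nrm x * Real.sin (nrm x))) •
        (hat x * hat x)

lemma nrm_sq (x : Fin 3 → ℝ) : nrm x ^ 2 = x 0 ^ 2 + x 1 ^ 2 + x 2 ^ 2 :=
  Real.sq_sqrt (by positivity)

lemma hat_cube (x : Fin 3 → ℝ) : hat x * (hat x * hat x) = (-(nrm x ^ 2)) • hat x := by
  have h := nrm_sq x
  ext i j
  fin_cases i <;> fin_cases j <;>
    simp [hat, Matrix.mul_apply, Fin.sum_univ_three, h] <;> ring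

lemma hat_cube' (x : Fin 3 → ℝ) : (hat x * hat x) * hat x = (-(nrm x ^ 2)) • hat x := by
  rw [mul_assoc, hat_cube]

lemma hat_four (x : Fin 3 → ℝ) :
    (hat x * hat x) * (hat x * hat x) = (-(nrm x ^ 2)) • (hat x * hat x) := by
  rw [← mul_assoc, hat_cube', Matrix.smul_mul]

/-- The matrices `J_r(x)` and
`K(x) = Id + (1/2) x_∧ + (1/‖x‖² − (1+cos‖x‖)/(2‖x‖ sin‖x‖)) x_∧²` are mutually inverse for
`0 < ‖x‖ < π`, i.e. `J_r(x) K(x) = Id`. -/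
theorem right_jacobian_inverse (x : Fin 3 → ℝ) (h0 : 0 < nrm x) (hπ : nrm x < Real.pi) :
    Jr x * JrInv x = 1 := by
  set t := nrm x with ht
  set A := hat x with hA
  set a : ℝ := (1 - Real.cos t) / t ^ 2 with ha
  set b : ℝ := (t - Real.sin t) / t ^ 3 with hb
  set c : ℝ := (1 / 2 : ℝ) with hc
  set d : ℝ := 1 / t ^ 2 - (1 + Real.cos t) / (2 * t * Real.sin t) with hd
  have hs : Real.sin t > 0 := Real.sin_pos_of_pos_of_lt_pi h0 hπ
  have hs' : Real.sin t ≠ 0 := ne_of_gt hs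
  have ht' : t ≠ 0 := ne_of_gt h0
  have hα : c - a + t ^ 2 * (a * d - b * c) = 0 := by
    rw [ha, hb, hc, hd]
    field_simp
    linear_combination t * Real.sin_sq_add_cos_sq t
  have hβ : d - a * c + b - t ^ 2 * (b * d) = 0 := by
    rw [ha, hb, hc, hd]
    field_simp
    ring_nf
  have key : Jr x * JrInv x =
      1 + (c - a + t ^ 2 * (a * d - b * c)) • A
        + (d - a * c + b - t ^ 2 * (b * d)) • (A * A) := by
    show (1 - a • A + b • (A * A)) * (1 + c • A + d • (A * A)) = _
    have h3 := hat_cube x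
    have h3' := hat_cube' x
    have h4 := hat_four x
    rw [← hA, ← ht] at h3 h3' h4
    simp only [add_mul, sub_mul, mul_add, mul_sub, one_mul, mul_one,
      Matrix.smul_mul, Matrix.mul_smul, smul_smul, h3, h3', h4]
    module
  rw [key, hα, hβ, zero_smul, zero_smul, add_zero, add_zero]
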